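/- Let n ≥ 2 and let f ∈ F, f ≠ 0, be given by an admissible linear system 𝒜 = (e₁, A, v) of dimension n whose left family and right family are each K-linearly independent and with 1 ∉ L(𝒜), where A has the block form A = [[1, b', b], [0, B, b''], [0, c', c]] (with B ∈ F^{(n−2)×(n−2)}, b' , c' ∈ F^{1×(n−2)}, b, c ∈ F, b'' ∈ F^{(n−2)×1}) and v = (0,…,0,λ)ᵀ with λ ∈ K (necessarily λ ≠ 0 since f ≠ 0). Then the n × n matrix A' = [[1, −(1/λ) c, −(1/λ) c' Σ], [0, −Σ b'', −Σ B Σ], [0, −b, −b' Σ]] (Σ = Σ_{n−2}) is invertible over F, 𝒜' = (e₁, A', e_n) is an admissible linear system of dimension n for f⁻¹, the left family and the right family of 𝒜' are each K-linearly independent, and 1 ∉ L(𝒜'). -/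

import Mathlib

open Matrix

/-- The permutation matrix `Σ_m` reversing the order of rows/columns. -/
def revMat (F : Type*) [Semiring F] (m : ℕ) : Matrix (Fin m) (Fin m) F :=
  Matrix.of fun p q => if q = p.rev then 1 else 0

namespace Inv10

abbrev Io (m : ℕ) := Fin 1 ⊕ (Fin m ⊕ Fin 1)
abbrev Ka (m : ℕ) := Fin 1 ⊕ (Fin 1 ⊕ Fin m)

@[simp] lemma fin1_eq_zero (p : Fin 1) : p = 0 := Subsingleton.elim p 0

variable {m : ℕ}

def sig : Io m → Io m
  | .inl _ => .inr (.inr 0)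
  | .inr (.inl j) => .inr (.inl j.rev)
  | .inr (.inr _) => .inl 0

def tau : Ka m → Io m
  | .inl _ => .inl 0
  | .inr (.inl _) => .inr (.inr 0)
  | .inr (.inr j) => .inr (.inl j.rev)

def nu : Io m → Ka m
  | .inl _ => .inl 0
  | .inr (.inl j) => .inr (.inr j.rev)
  | .inr (.inr _) => .inr (.inl 0)

@[simp] lemma sig_sig (i : Io m) : sig (sig i) = i := by
  rcases i with p | j | p <;> simp [sig, Fin.rev_rev]

@[simp] lemma tau_nu (i : Io m) : tau (nu i) = i := by
  rcases i with p | j | p <;> simp [tau, nu, Fin.rev_rev]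

@[simp] lemma nu_tau (k : Ka m) : nu (tau k) = k := by
  rcases k with p | p | j <;> simp [tau, nu, Fin.rev_rev]

lemma sig_inj : Function.Injective (sig (m := m)) :=
  fun a b h => by rw [← sig_sig a, h, sig_sig]

lemma tau_inj : Function.Injective (tau (m := m)) :=
  fun a b h => by rw [← nu_tau a, h, nu_tau]

variable {F : Type*} [DivisionRing F]

lemma mul_revMat_apply {α : Type*} [Fintype α] (M : Matrix α (Fin m) F) (i : α) (q : Fin m) :
    (M * revMat F m) i q = M i q.rev := by
  rw [mul_apply]
  rw [Finset.sum_eq_single q.rev (fun r _ hr => by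
      simp [revMat, show ¬(q = r.rev) from fun h => hr (by simp [h, Fin.rev_rev])])
    (by simp)]
  simp [revMat, Fin.rev_rev]

lemma revMat_mul_apply {α : Type*} [Fintype α] (M : Matrix (Fin m) α F) (p : Fin m) (j : α) :
    (revMat F m * M) p j = M p.rev j := by
  simp [revMat, mul_apply, ite_mul, zero_mul, Finset.sum_ite_eq']

variable {F : Type*} [DivisionRing F]

def matG (m : ℕ) (μ : F) : Matrix (Io m) (Io m) F :=
  of fun i i' => if i' = sig i then (if i = Sum.inl 0 then μ⁻¹ else 1) else 0

def matGinv (m : ℕ) (μ : F) : Matrix (Io m) (Io m) F :=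
  of fun i i' => if i' = sig i then (if i' = Sum.inl 0 then μ else 1) else 0

def matD (s : Matrix (Io m) (Fin 1) F) : Matrix (Io m) (Ka m) F :=
  of fun i k => if k = Sum.inl 0 then s i 0 else if i = tau k then -1 else 0

def matDinv (s : Matrix (Io m) (Fin 1) F) (f : F) : Matrix (Ka m) (Io m) F :=
  of fun k i => if i = Sum.inl 0 then (if k = Sum.inl 0 then f⁻¹ else s (tau k) 0 * f⁻¹)
    else if i = tau k then -1 else 0

lemma matD_apply' (s : Matrix (Io m) (Fin 1) F) (i : Io m) (k : Ka m) :
    matD s i k = if k = Sum.inl 0 then s i 0 else if k = nu i then -1 else 0 := by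
  rcases eq_or_ne k (Sum.inl 0) with h | h
  · simp [matD, h]
  · have : (i = tau k) ↔ (k = nu i) := ⟨fun h' => by rw [h', nu_tau], fun h' => by rw [h', tau_nu]⟩
    simp [matD, h, this]

lemma matG_mul_matGinv {μ : F} (hμ : μ ≠ 0) : matG m μ * matGinv m μ = 1 := by
  ext i k
  rw [mul_apply]
  simp only [matG, matGinv, of_apply, ite_mul, zero_mul, Finset.sum_ite_eq', Finset.mem_univ,
    if_true]
  rcases i with p | j | p <;> rcases k with q | q | q <;>
    simp [sig, one_apply, inv_mul_cancel₀ hμ, Fin.rev_rev, Fin.rev_inj, eq_comm]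

lemma matGinv_mul_matG {μ : F} (hμ : μ ≠ 0) : matGinv m μ * matG m μ = 1 := by
  ext i k
  rw [mul_apply]
  simp only [matG, matGinv, of_apply, ite_mul, zero_mul, Finset.sum_ite_eq', Finset.mem_univ,
    if_true]
  rcases i with p | j | p <;> rcases k with q | q | q <;>
    simp [sig, one_apply, mul_inv_cancel₀ hμ, Fin.rev_rev, Fin.rev_inj, eq_comm]

lemma matD_mul_matDinv {s : Matrix (Io m) (Fin 1) F} {f : F} (hf : f ≠ 0)
    (hs1 : s (Sum.inl 0) 0 = f) : matD s * matDinv s f = 1 := by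
  ext i i'
  rw [mul_apply]
  simp only [matD_apply', matDinv, of_apply]
  rcases eq_or_ne i' (Sum.inl 0) with rfl | hi'
  · simp only [if_pos rfl, Fintype.sum_sum_type, Fin.sum_univ_one]
    rcases i with p | j | p <;>
      simp [tau, nu, one_apply, hs1, mul_inv_cancel₀ hf, Finset.sum_ite_eq',
        mul_ite, ite_mul, Fin.rev_rev]
  · simp only [if_neg hi', mul_ite, mul_neg_one, mul_zero, ite_mul, zero_mul]
    rcases i' with q | q | q
    · exact absurd (by simp) hi'
    · rcases i with p | j | p
      · simp [tau, nu, one_apply, Fintype.sum_sum_type, Fin.rev_rev, Fin.rev_inj, eq_comm]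
      · simp only [tau, nu, one_apply, Fintype.sum_sum_type, Fin.sum_univ_one, Sum.inr.injEq,
          Sum.inl.injEq, reduceCtorEq, if_false]
        simp only [show ∀ x : Fin m, (q = Fin.rev x) ↔ (x = Fin.rev q) from fun x =>
          ⟨fun h => by rw [h, Fin.rev_rev], fun h => by rw [h, Fin.rev_rev]⟩]
        simp [Finset.sum_ite_eq', Fin.rev_inj]
        split_ifs with h <;> simp [h, eq_comm] <;> omega
      · simp [tau, nu, one_apply, Fintype.sum_sum_type, Fin.rev_rev, Fin.rev_inj, eq_comm]
    · rcases i with p | j | p <;>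
        simp [tau, nu, one_apply, Fintype.sum_sum_type, Finset.sum_ite_eq',
          Fin.rev_rev, Fin.rev_inj, eq_comm]

lemma matDinv_mul_matD {s : Matrix (Io m) (Fin 1) F} {f : F} (hf : f ≠ 0)
    (hs1 : s (Sum.inl 0) 0 = f) : matDinv s f * matD s = 1 := by
  ext k k'
  rw [mul_apply]
  simp only [matD, matDinv, of_apply, Fintype.sum_sum_type, Fin.sum_univ_one]
  rcases k with p | p | j <;> rcases k' with q | q | q <;>
    simp [tau, one_apply, hs1, inv_mul_cancel₀ hf, mul_ite, ite_mul, mul_assoc,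
      Finset.sum_ite_eq', Fin.rev_rev, Fin.rev_inj, eq_comm]
  split_ifs <;> simp

end Inv10

open Inv10

/-- Inverse of type (1,0): if `f ≠ 0` has a minimal ALS of dimension `n = m + 2` with
system matrix `[[1, b', b], [0, B, b''], [0, c', c]]`, right-hand side `(0,…,0,λ)ᵀ`
and `1 ∉ L(𝒜)`, then `A' = [[1, −(1/λ) c, −(1/λ) c' Σ], [0, −Σ b'', −Σ B Σ],
[0, −b, −b' Σ]]` gives a minimal ALS `(e₁, A', e_n)` of dimension `n` for `f⁻¹`
with `1 ∉ L(𝒜')`. -/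
theorem inverse_type_one_zero {K F : Type*} [Field K] [DivisionRing F] [Algebra K F]
    {m : ℕ}
    (f : F) (hne : f ≠ 0)
    (b c : F) (b' c' : Matrix (Fin 1) (Fin m) F) (B : Matrix (Fin m) (Fin m) F)
    (b'' : Matrix (Fin m) (Fin 1) F) (lam : K)
    (A : Matrix (Fin 1 ⊕ (Fin m ⊕ Fin 1)) (Fin 1 ⊕ (Fin m ⊕ Fin 1)) F)
    (hA : A = fromBlocks 1 (fromCols b' (Matrix.of fun _ _ => b)) 0
      (fromBlocks B b'' c' (Matrix.of fun _ _ => c)))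
    (v : Matrix (Fin 1 ⊕ (Fin m ⊕ Fin 1)) (Fin 1) F)
    (hv : v = Matrix.of fun p _ =>
      if p = Sum.inr (Sum.inr 0) then algebraMap K F lam else 0)
    (Binv : Matrix (Fin 1 ⊕ (Fin m ⊕ Fin 1)) (Fin 1 ⊕ (Fin m ⊕ Fin 1)) F)
    (hAB : A * Binv = 1) (hBA : Binv * A = 1)
    (hf : f = (Binv * v) (Sum.inl 0) 0)
    (hleft : LinearIndependent K fun p => (Binv * v) p 0)
    (hright : LinearIndependent K fun q => Binv (Sum.inl 0) q)
    (honeL : (1 : F) ∉ Submodule.span K (Set.range fun p => (Binv * v) p 0)) :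
    let S : Matrix (Fin m) (Fin m) F := revMat F m
    let A' : Matrix (Fin 1 ⊕ (Fin m ⊕ Fin 1)) (Fin 1 ⊕ (Fin 1 ⊕ Fin m)) F :=
      fromBlocks 1
        (fromCols (Matrix.of fun _ _ => -((algebraMap K F lam)⁻¹ * c))
          (-((algebraMap K F lam)⁻¹ • (c' * S))))
        0
        (fromBlocks (-(S * b'')) (-(S * B * S))
          (Matrix.of fun _ _ => -b) (-(b' * S)))
    let v' : Matrix (Fin 1 ⊕ (Fin m ⊕ Fin 1)) (Fin 1) F :=
      Matrix.of fun p _ => if p = Sum.inr (Sum.inr 0) then 1 else 0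
    ∃ B' : Matrix (Fin 1 ⊕ (Fin 1 ⊕ Fin m)) (Fin 1 ⊕ (Fin m ⊕ Fin 1)) F,
      A' * B' = 1 ∧ B' * A' = 1 ∧
      (B' * v') (Sum.inl 0) 0 = f⁻¹ ∧
      (LinearIndependent K fun p => (B' * v') p 0) ∧
      (LinearIndependent K fun q => B' (Sum.inl 0) q) ∧
      (1 : F) ∉ Submodule.span K (Set.range fun p => (B' * v') p 0) := by

  intro S A' v'
  have hSdef : S = revMat F m := rfl
  have hA'def : A' = fromBlocks 1
        (fromCols (Matrix.of fun _ _ => -((algebraMap K F lam)⁻¹ * c))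
          (-((algebraMap K F lam)⁻¹ • (c' * revMat F m))))
        0
        (fromBlocks (-(revMat F m * b'')) (-(revMat F m * B * revMat F m))
          (Matrix.of fun _ _ => -b) (-(b' * revMat F m))) := rfl
  have hv'def : v' = Matrix.of fun p (_ : Fin 1) =>
      if p = Sum.inr (Sum.inr 0) then (1:F) else 0 := rfl
  have hμ : algebraMap K F lam ≠ 0 := by
    intro h
    apply hne
    rw [hf, hv, mul_apply]
    simp [h]
  have hlam : lam ≠ 0 := by
    intro h
    exact hμ (by rw [h]; simp)
  have hs1 : (Binv * v) (Sum.inl 0) 0 = f := hf.symm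
  have hAs : A * (Binv * v) = v := by rw [← Matrix.mul_assoc, hAB, Matrix.one_mul]
  -- factorization of A'
  have hAD : A * matD (Binv * v) =
      of (fun i k => if k = Sum.inl 0 then v i 0 else -A i (tau k)) := by
    ext i k
    rw [mul_apply]
    rcases eq_or_ne k (Sum.inl 0) with rfl | hk
    · simp only [matD, of_apply, if_pos rfl]
      have h2 := congrFun (congrFun hAs i) 0
      rw [mul_apply] at h2
      simpa using h2
    · simp [matD, hk, mul_ite, mul_neg_one, mul_zero, Finset.sum_ite_eq']
  have hfact : A' = matG m (algebraMap K F lam) * (A * matD (Binv * v)) := by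
    rw [hAD, hA'def]
    ext i k
    rw [mul_apply]
    simp only [matG, of_apply, ite_mul, zero_mul, Finset.sum_ite_eq', Finset.mem_univ,
      if_true]
    rcases i with p | j | p <;> rcases k with q | q | q <;>
      simp [sig, tau, hA, hv, one_apply, fromBlocks, fromCols, mul_revMat_apply,
        revMat_mul_apply, inv_mul_cancel₀ hμ, mul_neg, smul_eq_mul, Fin.rev_rev]
  set B' : Matrix (Ka m) (Io m) F :=
    matDinv (Binv * v) f * (Binv * matGinv m (algebraMap K F lam)) with hB'
  -- column of Binv
  have hBcol : ∀ j, Binv j (Sum.inl 0) = if j = Sum.inl 0 then 1 else 0 := by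
    intro j
    have h1 := congrFun (congrFun hBA j) (Sum.inl 0)
    rw [mul_apply] at h1
    have hA1 : ∀ i, A i (Sum.inl 0) = if i = Sum.inl 0 then 1 else 0 := by
      intro i; rcases i with p | q | p <;> simp [hA, one_apply, fromBlocks]
    simp only [hA1, mul_ite, mul_one, mul_zero, Finset.sum_ite_eq', Finset.mem_univ,
      if_true] at h1
    rw [h1]
    simp [one_apply]
  -- the left family of the new system
  have hs' : ∀ k, (B' * v') k 0 =
      if k = Sum.inl 0 then f⁻¹ else (Binv * v) (tau k) 0 * f⁻¹ := by
    intro k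
    have h1 : matGinv m (algebraMap K F lam) * v' =
        of (fun i (_ : Fin 1) => if i = Sum.inl 0 then (1:F) else 0) := by
      ext i q
      rw [mul_apply, hv'def]
      simp only [matGinv, of_apply, ite_mul, zero_mul, Finset.sum_ite_eq', Finset.mem_univ,
        if_true]
      rcases i with p | j | p <;> simp [sig]
    have h2 : Binv * of (fun (i : Io m) (_ : Fin 1) => if i = Sum.inl 0 then (1:F) else 0) =
        of (fun (i : Io m) (_ : Fin 1) => if i = Sum.inl 0 then (1:F) else 0) := by
      ext j q
      rw [mul_apply]
      simp only [of_apply, mul_ite, mul_one, mul_zero, Finset.sum_ite_eq', Finset.mem_univ,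
        if_true]
      exact hBcol j
    rw [hB', Matrix.mul_assoc, Matrix.mul_assoc, h1, h2, mul_apply]
    simp only [matDinv, of_apply, mul_ite, mul_one, mul_zero, Finset.sum_ite_eq',
      Finset.mem_univ, if_true, if_pos rfl]
  -- the right family of the new system
  have hrow : ∀ q, B' (Sum.inl 0) q =
      f⁻¹ * (Binv (Sum.inl 0) (sig q) * (if q = Sum.inl 0 then algebraMap K F lam else 1)) := by
    intro q
    rw [hB', mul_apply]
    have hD1 : ∀ i : Io m, matDinv (Binv * v) f (Sum.inl 0) i =
        if i = Sum.inl 0 then f⁻¹ else 0 := by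
      intro i
      rcases eq_or_ne i (Sum.inl 0) with rfl | hi
      · simp [matDinv]
      · simp [matDinv, hi, tau]
    simp only [hD1, ite_mul, zero_mul, Finset.sum_ite_eq', Finset.mem_univ, if_true]
    rw [mul_apply]
    simp only [matGinv, of_apply]
    simp only [show ∀ b₀ : Io m, (q = sig b₀) = (b₀ = sig q) from fun b₀ =>
      propext ⟨fun h => by rw [h, sig_sig], fun h => by rw [h, sig_sig]⟩]
    simp [mul_ite, mul_zero, Finset.sum_ite_eq']
  -- linear independence infrastructure
  have hvOpt : LinearIndependent K
      (fun o => Option.casesOn' o (1:F) (fun i => (Binv * v) i 0) : Option (Io m) → F) :=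
    hleft.option honeL
  refine ⟨B', ?_, ?_, ?_, ?_, ?_, ?_⟩
  · rw [hfact, hB']
    rw [Matrix.mul_assoc (matG m _) (A * matD (Binv * v)) _]
    rw [Matrix.mul_assoc A (matD (Binv * v)) _]
    rw [← Matrix.mul_assoc (matD (Binv * v)) (matDinv (Binv * v) f) _]
    rw [matD_mul_matDinv hne hs1, Matrix.one_mul]
    rw [← Matrix.mul_assoc A Binv, hAB, Matrix.one_mul]
    exact matG_mul_matGinv hμ
  · rw [hfact, hB']
    rw [Matrix.mul_assoc (matDinv (Binv * v) f) (Binv * matGinv m _) _]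
    rw [Matrix.mul_assoc Binv (matGinv m _) _]
    rw [← Matrix.mul_assoc (matGinv m _) (matG m _) _, matGinv_mul_matG hμ, Matrix.one_mul]
    rw [← Matrix.mul_assoc Binv A _, hBA, Matrix.one_mul]
    exact matDinv_mul_matD hne hs1
  · rw [hs']; simp
  · -- left family linearly independent
    have hginj : Function.Injective
        (fun k : Ka m => if k = Sum.inl 0 then none else some (tau k)) := by
      intro a b hab
      by_cases ha : a = Sum.inl 0 <;> by_cases hb : b = Sum.inl 0 <;>
        simp [ha, hb] at hab ⊢
      exact tau_inj hab
    have hcomp := hvOpt.comp _ hginj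
    have hEq : (fun p => (B' * v') p 0) =
        (fun x => x * f⁻¹) ∘ ((fun o => Option.casesOn' o (1:F) (fun i => (Binv * v) i 0)) ∘
          (fun k : Ka m => if k = Sum.inl 0 then none else some (tau k))) := by
      funext k
      rw [hs' k]
      by_cases hk : k = Sum.inl 0 <;> simp [hk, Option.casesOn']
    rw [hEq]
    exact hcomp.map' (LinearMap.mulRight K f⁻¹)
      (LinearMap.ker_eq_bot.mpr (mul_left_injective₀ (inv_ne_zero hne)))
  · -- right family linearly independent
    have hcomp := hright.comp sig sig_inj
    have hu := hcomp.units_smul (fun q => if q = Sum.inl 0 then Units.mk0 lam hlam else 1)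
    have hEq : (fun q => B' (Sum.inl 0) q) =
        (fun x => f⁻¹ * x) ∘ (((fun q : Io m => if q = Sum.inl 0 then Units.mk0 lam hlam
          else 1) : Io m → Kˣ) • ((fun q => Binv (Sum.inl 0) q) ∘ sig)) := by
      funext q
      rw [hrow q]
      by_cases hq : q = Sum.inl 0 <;>
        simp only [hq, if_pos rfl, if_neg, Function.comp_apply, Pi.smul_apply',
          Units.smul_def, Units.val_mk0, Units.val_one, one_smul, mul_one, Algebra.smul_def]
      · congr 1
        exact (Algebra.commutes lam _).symm
      · simp [hq]
    rw [hEq]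
    exact hu.map' (LinearMap.mulLeft K f⁻¹)
      (LinearMap.ker_eq_bot.mpr (mul_right_injective₀ (inv_ne_zero hne)))
  · -- 1 not in the span of the left family
    intro hmem
    have h4 : (1:F) * f ∈ Submodule.map (LinearMap.mulRight K f)
        (Submodule.span K (Set.range fun p => (B' * v') p 0)) :=
      Submodule.mem_map_of_mem hmem
    rw [Submodule.map_span, ← Set.range_comp] at h4
    have hEq3 : (⇑(LinearMap.mulRight K f) ∘ fun p => (B' * v') p 0) =
        (fun k : Ka m => if k = Sum.inl 0 then (1:F) else (Binv * v) (tau k) 0) := by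
      funext k
      simp only [Function.comp_apply, LinearMap.mulRight_apply, hs' k]
      by_cases hk : k = Sum.inl 0 <;>
        simp [hk, mul_assoc, inv_mul_cancel₀ hne]
    rw [hEq3, one_mul] at h4
    have hnot := hvOpt.notMem_span_image (s := {o : Option (Io m) | o ≠ some (Sum.inl 0)})
      (x := some (Sum.inl 0)) (by simp)
    apply hnot
    have hsub : Set.range (fun k : Ka m => if k = Sum.inl 0 then (1:F) else (Binv * v) (tau k) 0)
        ⊆ (fun o => Option.casesOn' o (1:F) (fun i => (Binv * v) i 0)) ''
          {o : Option (Io m) | o ≠ some (Sum.inl 0)} := by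
      rintro x ⟨k, rfl⟩
      by_cases hk : k = Sum.inl 0
      · exact ⟨none, by simp, by simp [hk, Option.casesOn']⟩
      · refine ⟨some (tau k), ?_, by simp [hk, Option.casesOn']⟩
        simp only [Set.mem_setOf_eq, ne_eq, Option.some.injEq]
        intro h
        apply hk
        rw [← nu_tau k, h]
        rfl
    have h5 := Submodule.span_mono hsub h4
    simpa [Option.casesOn', ← hf] using h5
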